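/- Let A be an n×n labeled transition matrix (whose entries do not contain τ), S a boolean n×n matrix of silent steps, V a surjective boolean n×N collector, and Π = S*. If the weak-bisimulation conditions VVᵀΠV = ΠV and VVᵀΠAΠV = ΠAΠV hold, then (VᵀSV)* (VᵀAV) (VᵀSV)* = Vᵀ Π A Π V. (Soundness of weak lumping: taking the τ-closure after lumping agrees with lumping the τ-closed system.) -/

import Mathlib

open Matrix

instance : CommSemiring Prop where
  add a b := a ∨ b
  add_assoc a b c := propext or_assoc
  zero := False
  zero_add a := false_or a
  add_zero a := or_false a
  add_comm a b := propext or_comm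
  nsmul n p := n ≠ 0 ∧ p
  nsmul_zero p := by show ((0:ℕ) ≠ 0 ∧ p) = False; simp
  nsmul_succ n p := by
    show ((n + 1 : ℕ) ≠ 0 ∧ p) = ((n ≠ 0 ∧ p) ∨ p)
    by_cases h : n = 0 <;> simp [h]
  mul a b := a ∧ b
  mul_assoc a b c := propext and_assoc
  one := True
  one_mul a := true_and a
  mul_one a := and_true a
  left_distrib a b c := propext and_or_left
  right_distrib a b c := propext or_and_right
  zero_mul a := false_and a
  mul_zero a := and_false a
  mul_comm a b := propext and_comm

instance {α : Type*} : CommSemiring (Set α) where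
  add a b := a ∪ b
  add_assoc := Set.union_assoc
  zero := (∅ : Set α)
  zero_add := Set.empty_union
  add_zero := Set.union_empty
  add_comm := Set.union_comm
  nsmul n s := {x ∈ s | n ≠ 0}
  nsmul_zero s := by show {x ∈ s | (0:ℕ) ≠ 0} = (∅ : Set α); simp
  nsmul_succ n s := by
    show {x ∈ s | (n + 1 : ℕ) ≠ 0} = {x ∈ s | n ≠ 0} ∪ s
    by_cases h : n = 0 <;> ext x <;> simp [h]
  mul a b := a ∩ b
  mul_assoc := Set.inter_assoc
  one := (Set.univ : Set α)
  one_mul := Set.univ_inter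
  mul_one := Set.inter_univ
  left_distrib := Set.inter_union_distrib_left
  right_distrib := Set.union_inter_distrib_right
  zero_mul := Set.empty_inter
  mul_zero := Set.inter_empty
  mul_comm := Set.inter_comm

/-- Embedding of boolean matrices into `Set 𝒜`-labeled matrices:
a `True` entry becomes the full action set, a `False` entry the empty set. -/
def emb (𝒜 : Type*) {m p : Type*} (M : Matrix m p Prop) : Matrix m p (Set 𝒜) :=
  Matrix.of fun i j => {_a : 𝒜 | M i j}

/-- Reflexive-transitive closure `S* = Σ_{k ≥ 0} S^k` of a boolean matrix. -/
def mstar {n : ℕ} (S : Matrix (Fin n) (Fin n) Prop) : Matrix (Fin n) (Fin n) Prop :=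
  Matrix.of fun i j => ∃ k : ℕ, (S ^ k) i j

lemma prop_sum {ι : Type*} (s : Finset ι) (f : ι → Prop) : (∑ k ∈ s, f k) ↔ ∃ k ∈ s, f k := by
  classical
  induction s using Finset.cons_induction with
  | empty => simp only [Finset.sum_empty]; show False ↔ _; simp
  | cons a s ha ih =>
    rw [Finset.sum_cons]
    show f a ∨ (∑ k ∈ s, f k) ↔ _
    rw [ih]
    simp [Finset.mem_cons, or_and_right, exists_or]

lemma set_sum {α : Type*} {ι : Type*} (s : Finset ι) (f : ι → Set α) (a : α) :
    a ∈ (∑ k ∈ s, f k) ↔ ∃ k ∈ s, a ∈ f k := by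
  classical
  induction s using Finset.cons_induction with
  | empty => simp only [Finset.sum_empty]; show a ∈ (∅ : Set α) ↔ _; simp
  | cons b s hb ih =>
    rw [Finset.sum_cons]
    show a ∈ f b ∪ _ ↔ _
    rw [Set.mem_union, ih]
    simp [Finset.mem_cons, or_and_right, exists_or]

lemma pmul_apply {n m p : ℕ} (M : Matrix (Fin n) (Fin m) Prop) (N : Matrix (Fin m) (Fin p) Prop)
    (i : Fin n) (j : Fin p) : (M * N) i j ↔ ∃ k, M i k ∧ N k j := by
  rw [Matrix.mul_apply, prop_sum]
  show (∃ k ∈ Finset.univ, M i k ∧ N k j) ↔ _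
  simp

lemma smul_apply' {𝒜 : Type*} {n m p : ℕ} (M : Matrix (Fin n) (Fin m) (Set 𝒜))
    (N : Matrix (Fin m) (Fin p) (Set 𝒜)) (i : Fin n) (j : Fin p) (a : 𝒜) :
    a ∈ (M * N) i j ↔ ∃ k, a ∈ M i k ∧ a ∈ N k j := by
  rw [Matrix.mul_apply, set_sum]
  show (∃ k ∈ Finset.univ, a ∈ M i k ∩ N k j) ↔ _
  simp

lemma pone_apply {n : ℕ} (i j : Fin n) : (1 : Matrix (Fin n) (Fin n) Prop) i j ↔ i = j := by
  rw [Matrix.one_apply]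
  by_cases h : i = j
  · simp only [if_pos h]; show True ↔ _; simp [h]
  · simp only [if_neg h]; show False ↔ _; simp [h]

lemma emb_mem {𝒜 : Type*} {m p : Type*} (M : Matrix m p Prop) (i : m) (j : p) (a : 𝒜) :
    a ∈ emb 𝒜 M i j ↔ M i j := Iff.rfl

lemma emb_mul {𝒜 : Type*} {n m p : ℕ} (M : Matrix (Fin n) (Fin m) Prop)
    (N : Matrix (Fin m) (Fin p) Prop) : emb 𝒜 (M * N) = emb 𝒜 M * emb 𝒜 N := by
  funext i j
  ext a
  rw [emb_mem, smul_apply', pmul_apply]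
  simp only [emb_mem]

lemma mstar_refl {n : ℕ} (S : Matrix (Fin n) (Fin n) Prop) (i : Fin n) : mstar S i i :=
  ⟨0, by rw [pow_zero]; exact (pone_apply i i).2 rfl⟩

lemma mstar_idem {n : ℕ} (S : Matrix (Fin n) (Fin n) Prop) :
    mstar S * mstar S = mstar S := by
  funext i j
  apply propext
  rw [pmul_apply]
  constructor
  · rintro ⟨m, ⟨k1, h1⟩, ⟨k2, h2⟩⟩
    exact ⟨k1 + k2, by rw [pow_add]; exact (pmul_apply _ _ _ _).2 ⟨m, h1, h2⟩⟩
  · intro h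
    exact ⟨i, mstar_refl S i, h⟩

lemma mstar_lump {n N : ℕ} (S : Matrix (Fin n) (Fin n) Prop) (V : Matrix (Fin n) (Fin N) Prop)
    (hcol : ∀ i, ∃! j, V i j) (hsurj : ∀ j, ∃ i, V i j)
    (h₁ : V * Vᵀ * mstar S * V = mstar S * V) :
    mstar (Vᵀ * S * V) = Vᵀ * mstar S * V := by
  have claim1 : ∀ (k : ℕ) (c d : Fin N), ((Vᵀ * S * V) ^ k) c d → (Vᵀ * mstar S * V) c d := by
    intro k
    induction k with
    | zero =>
      intro c d h
      rw [pow_zero] at h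
      obtain rfl := (pone_apply c d).1 h
      obtain ⟨i, hi⟩ := hsurj c
      exact (pmul_apply _ _ _ _).2 ⟨i, (pmul_apply _ _ _ _).2 ⟨i, hi, mstar_refl S i⟩, hi⟩
    | succ k ih =>
      intro c d h
      rw [pow_succ'] at h
      obtain ⟨e, hce, hed⟩ := (pmul_apply _ _ _ _).1 h
      obtain ⟨i1, hc1, h1e⟩ := (pmul_apply _ _ _ _).1 hce
      obtain ⟨i0, hi0c, hS01⟩ := (pmul_apply _ _ _ _).1 hc1
      -- hi0c : Vᵀ c i0, hS01 : S i0 i1, h1e : V i1 e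
      obtain ⟨i2, h2e', h23d⟩ := (pmul_apply _ _ _ _).1 (ih e d hed)
      obtain ⟨i2', h2a, hPi⟩ := (pmul_apply _ _ _ _).1 h2e'
      -- h2a : Vᵀ e i2', hPi : mstar S i2' i2, h23d : V i2 d
      -- apply h₁ at entry (i1, d)
      have hVV : (V * Vᵀ * mstar S * V) i1 d :=
        (pmul_apply _ _ _ _).2 ⟨i2,
          (pmul_apply _ _ _ _).2 ⟨i2', (pmul_apply _ _ _ _).2 ⟨e, h1e, h2a⟩, hPi⟩, h23d⟩
      rw [h₁] at hVV
      obtain ⟨i4, ⟨k', hk'⟩, h4d⟩ := (pmul_apply _ _ _ _).1 hVV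
      refine (pmul_apply _ _ _ _).2 ⟨i4, (pmul_apply _ _ _ _).2 ⟨i0, hi0c, ?_⟩, h4d⟩
      exact ⟨k' + 1, by rw [pow_succ']; exact (pmul_apply _ _ _ _).2 ⟨i1, hS01, hk'⟩⟩
  have claim2 : ∀ (k : ℕ) (i i' : Fin n) (c d : Fin N),
      V i c → (S ^ k) i i' → V i' d → ((Vᵀ * S * V) ^ k) c d := by
    intro k
    induction k with
    | zero =>
      intro i i' c d hic hS hid
      rw [pow_zero] at hS ⊢
      obtain rfl := (pone_apply i i').1 hS
      obtain ⟨e, _, hu⟩ := hcol i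
      exact (pone_apply c d).2 ((hu c hic).trans (hu d hid).symm)
    | succ k ih =>
      intro i i' c d hic hS hid
      rw [pow_succ'] at hS
      obtain ⟨m, him, hmi'⟩ := (pmul_apply _ _ _ _).1 hS
      obtain ⟨e, hme, _⟩ := hcol m
      rw [pow_succ']
      refine (pmul_apply _ _ _ _).2 ⟨e, ?_, ih m i' e d hme hmi' hid⟩
      exact (pmul_apply _ _ _ _).2 ⟨m, (pmul_apply _ _ _ _).2 ⟨i, hic, him⟩, hme⟩
  funext c d
  apply propext
  constructor
  · rintro ⟨k, hk⟩
    exact claim1 k c d hk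
  · intro h
    obtain ⟨i', hci', hi'd⟩ := (pmul_apply _ _ _ _).1 h
    obtain ⟨i, hic, ⟨k, hk⟩⟩ := (pmul_apply _ _ _ _).1 hci'
    exact ⟨k, claim2 k i i' c d hic hk hi'd⟩

/-- Entrywise inclusion of labeled matrices. -/
def mle {𝒜 : Type*} {m p : Type*} (M M' : Matrix m p (Set 𝒜)) : Prop :=
  ∀ i j a, a ∈ M i j → a ∈ M' i j

lemma mle_refl {𝒜 : Type*} {m p : Type*} (M : Matrix m p (Set 𝒜)) : mle M M :=
  fun _ _ _ h => h

lemma mle_antisymm {𝒜 : Type*} {m p : Type*} {M M' : Matrix m p (Set 𝒜)}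
    (h : mle M M') (h' : mle M' M) : M = M' := by
  funext i j; ext a; exact ⟨h i j a, h' i j a⟩

lemma mle_of_eq {𝒜 : Type*} {m p : Type*} {M M' : Matrix m p (Set 𝒜)} (h : M = M') :
    mle M M' := h ▸ mle_refl M

lemma mle_trans {𝒜 : Type*} {m p : Type*} {M M' M'' : Matrix m p (Set 𝒜)}
    (h : mle M M') (h' : mle M' M'') : mle M M'' :=
  fun i j a ha => h' i j a (h i j a ha)

lemma mle_mul {𝒜 : Type*} {n m p : ℕ} {M M' : Matrix (Fin n) (Fin m) (Set 𝒜)}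
    {P P' : Matrix (Fin m) (Fin p) (Set 𝒜)} (h : mle M M') (h' : mle P P') :
    mle (M * P) (M' * P') := by
  intro i j a ha
  obtain ⟨k, h1, h2⟩ := (smul_apply' _ _ _ _ _).1 ha
  exact (smul_apply' _ _ _ _ _).2 ⟨k, h i k a h1, h' k j a h2⟩

lemma le_star_mul {𝒜 : Type*} {n p : ℕ} (S : Matrix (Fin n) (Fin n) Prop)
    (X : Matrix (Fin n) (Fin p) (Set 𝒜)) : mle X (emb 𝒜 (mstar S) * X) := by
  intro i j a ha
  exact (smul_apply' _ _ _ _ _).2 ⟨i, (emb_mem _ _ _ _).2 (mstar_refl S i), ha⟩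

lemma le_VVt_mul {𝒜 : Type*} {n N p : ℕ} (V : Matrix (Fin n) (Fin N) Prop)
    (hcol : ∀ i, ∃! j, V i j) (X : Matrix (Fin n) (Fin p) (Set 𝒜)) :
    mle X (emb 𝒜 V * (emb 𝒜 Vᵀ * X)) := by
  intro i j a ha
  obtain ⟨c, hc, _⟩ := hcol i
  refine (smul_apply' _ _ _ _ _).2 ⟨c, (emb_mem _ _ _ _).2 hc, ?_⟩
  exact (smul_apply' _ _ _ _ _).2 ⟨i, (emb_mem _ _ _ _).2 hc, ha⟩


/-- soundness of weak lumping — `τ`-closing the lumped system agrees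
with lumping the `τ`-closed system: `(VᵀSV)* (VᵀAV) (VᵀSV)* = VᵀΠAΠV`. -/
theorem weak_lumping_sound {n N : ℕ} {𝒜 : Type*} (τ : 𝒜)
    (A : Matrix (Fin n) (Fin n) (Set 𝒜)) (hA : ∀ i j, τ ∉ A i j)
    (S : Matrix (Fin n) (Fin n) Prop)
    (V : Matrix (Fin n) (Fin N) Prop)
    (hcol : ∀ i, ∃! j, V i j) (hsurj : ∀ j, ∃ i, V i j)
    (h₁ : V * Vᵀ * mstar S * V = mstar S * V)
    (h₂ : emb 𝒜 V * emb 𝒜 Vᵀ * emb 𝒜 (mstar S) * A * emb 𝒜 (mstar S) * emb 𝒜 V =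
      emb 𝒜 (mstar S) * A * emb 𝒜 (mstar S) * emb 𝒜 V) :
    emb 𝒜 (mstar (Vᵀ * S * V)) * (emb 𝒜 Vᵀ * A * emb 𝒜 V) * emb 𝒜 (mstar (Vᵀ * S * V)) =
      emb 𝒜 Vᵀ * emb 𝒜 (mstar S) * A * emb 𝒜 (mstar S) * emb 𝒜 V := by
  rw [mstar_lump S V hcol hsurj h₁, emb_mul, emb_mul]
  simp only [Matrix.mul_assoc] at h₂ ⊢
  set T := emb 𝒜 Vᵀ with hT
  set E := emb 𝒜 V with hE
  set P := emb 𝒜 (mstar S) with hPd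
  have e₁ : E * (T * (P * E)) = P * E := by
    have := congrArg (emb 𝒜) h₁
    rw [emb_mul, emb_mul, emb_mul, emb_mul] at this
    simpa only [Matrix.mul_assoc, ← hT, ← hE, ← hPd] using this
  have e₂ : E * (T * (P * (A * (P * E)))) = P * (A * (P * E)) := h₂
  have PP : P * (P * (A * (P * E))) = P * (A * (P * E)) := by
    rw [← Matrix.mul_assoc, hPd, ← emb_mul, mstar_idem]
  have inner : A * (E * (T * (P * E))) = A * (P * E) := by rw [e₁]
  rw [inner]
  apply mle_antisymm
  · have h3 : mle (E * (T * (A * (P * E)))) (P * (A * (P * E))) :=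
      mle_trans (mle_mul (mle_refl E) (mle_mul (mle_refl T)
        (le_star_mul S (A * (P * E))))) (mle_of_eq e₂)
    exact mle_trans (mle_mul (mle_refl T) (mle_mul (mle_refl P) h3))
      (mle_of_eq (congrArg (T * ·) PP))
  · exact mle_mul (mle_refl T) (mle_mul (mle_refl P) (le_VVt_mul V hcol (A * (P * E))))
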